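/- For every integer n ≥ 1, ω_n(−1/2) = (4(−1)^n n!/π^{n+1}) · (1 − 1/2^{n+1}) · sin(πn/2) · ζ(n+1). In particular, ω_{2k}(−1/2) = 0 for every integer k ≥ 1. -/

import Mathlib

open Finset MeasureTheory Real

/-- Stirling numbers of the second kind. -/
def stirling2 : ℕ → ℕ → ℕ
  | 0, 0 => 1
  | 0, _ + 1 => 0
  | _ + 1, 0 => 0
  | n + 1, k + 1 => (k + 1) * stirling2 n (k + 1) + stirling2 n k

/-- The generalized geometric polynomials `ω_{n,r}(x) = Σ_{k=0}^n S(n,k) (r)_k x^k`,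
where `(r)_k` is the rising factorial (Pochhammer symbol). -/
noncomputable def geomPoly (n : ℕ) (r x : ℝ) : ℝ :=
  ∑ k ∈ Finset.range (n + 1), (stirling2 n k : ℝ) * (ascPochhammer ℝ k).eval r * x ^ k

/-- The exponential polynomials `φ_n(x) = Σ_{k=0}^n S(n,k) x^k`. -/
noncomputable def expPoly (n : ℕ) (x : ℝ) : ℝ :=
  ∑ k ∈ Finset.range (n + 1), (stirling2 n k : ℝ) * x ^ k

/-- The Riemann zeta function `ζ(s) = Σ_{m=1}^∞ m^{-s}` (for real `s > 1`). -/
noncomputable def realZeta (s : ℝ) : ℝ := ∑' m : ℕ, 1 / ((m : ℝ) + 1) ^ s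

lemma stirling2_zero_succ (k : ℕ) : stirling2 0 (k+1) = 0 := rfl
lemma stirling2_succ_zero (n : ℕ) : stirling2 (n+1) 0 = 0 := rfl
lemma stirling2_succ (n k : ℕ) :
    stirling2 (n+1) (k+1) = (k + 1) * stirling2 n (k + 1) + stirling2 n k := rfl

lemma stirling2_eq_zero : ∀ {n k : ℕ}, n < k → stirling2 n k = 0
  | 0, k+1, _ => rfl
  | n+1, k+1, h => by
    rw [stirling2_succ, stirling2_eq_zero (by omega), stirling2_eq_zero (by omega)]
    simp

lemma stirling2_one : ∀ {n : ℕ}, 1 ≤ n → stirling2 n 1 = 1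
  | 1, _ => rfl
  | n+2, _ => by
    rw [stirling2_succ, stirling2_one (by omega)]
    simp [stirling2_succ_zero]

lemma stirling2_key : ∀ (n k : ℕ),
    ((k : ℚ) + 1) * stirling2 n (k+1) = ∑ j ∈ range n, (n.choose j : ℚ) * stirling2 j k
  | 0, k => by simp [stirling2_zero_succ]
  | n+1, 0 => by
    have : ∀ j ∈ range (n+1), ((n+1).choose j : ℚ) * stirling2 j 0 = if j = 0 then 1 else 0 := by
      intro j hj
      rcases j with _ | j
      · simp [stirling2]
      · simp [stirling2_succ_zero]
    rw [Finset.sum_congr rfl this, Finset.sum_ite_eq' (range (n+1)) 0 (fun _ => (1:ℚ))]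
    simp [stirling2_one (Nat.le_add_left 1 n)]
  | n+1, k+1 => by
    have e0 : ∀ i, ((n+1).choose (i+1) : ℚ) = n.choose i + n.choose (i+1) := by
      intro i; rw [Nat.choose_succ_succ]; push_cast; ring
    rw [Finset.sum_range_succ' (fun j => ((n+1).choose j : ℚ) * stirling2 j (k+1))]
    simp only [e0, Nat.choose_zero_right, Nat.cast_one, one_mul, add_mul]
    rw [Finset.sum_add_distrib]
    have e1 : ∑ i ∈ range n, (n.choose i : ℚ) * stirling2 (i+1) (k+1)
        = ((k:ℚ)+1) * (∑ i ∈ range n, (n.choose i : ℚ) * stirling2 i (k+1))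
          + ∑ i ∈ range n, (n.choose i : ℚ) * stirling2 i k := by
      rw [Finset.mul_sum, ← Finset.sum_add_distrib]
      refine Finset.sum_congr rfl fun i _ => ?_
      rw [stirling2_succ]; push_cast; ring
    have e2 : ∑ i ∈ range n, ((n.choose (i+1)) : ℚ) * stirling2 (i+1) (k+1)
        = (∑ j ∈ range (n+1), (n.choose j : ℚ) * stirling2 j (k+1))
          - (n.choose 0 : ℚ) * stirling2 0 (k+1) := by
      rw [Finset.sum_range_succ' (fun j => (n.choose j : ℚ) * stirling2 j (k+1))]
      ring
    rw [e1, e2, Finset.sum_range_succ (fun j => (n.choose j : ℚ) * stirling2 j (k+1)),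
      ← stirling2_key n (k+1), ← stirling2_key n k, stirling2_zero_succ, stirling2_succ]
    push_cast [Nat.choose_self]
    ring

lemma stirling2_key' (n k : ℕ) :
    (k+1) * stirling2 n (k+1) = ∑ j ∈ range n, n.choose j * stirling2 j k := by
  exact_mod_cast stirling2_key n k

lemma geomPoly_one_eq (n : ℕ) (x : ℝ) :
    geomPoly n 1 x = ∑ k ∈ Finset.range (n + 1), (stirling2 n k : ℝ) * k.factorial * x ^ k := by
  unfold geomPoly
  refine Finset.sum_congr rfl fun k _ => ?_
  rw [ascPochhammer_eval_one]

lemma geomPoly_one_eq' {n m : ℕ} (h : n < m) (x : ℝ) :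
    geomPoly n 1 x = ∑ k ∈ Finset.range m, (stirling2 n k : ℝ) * k.factorial * x ^ k := by
  rw [geomPoly_one_eq]
  refine Finset.sum_subset (Finset.range_subset_range.2 h) fun k _ hk => ?_
  rw [stirling2_eq_zero (by simp at hk ⊢; omega)]
  simp

lemma geomPoly_zero (x : ℝ) : geomPoly 0 1 x = 1 := by
  simp [geomPoly, stirling2]

lemma geomPoly_rec (n : ℕ) (hn : 1 ≤ n) (x : ℝ) :
    geomPoly n 1 x = x * ∑ j ∈ range n, (n.choose j : ℝ) * geomPoly j 1 x := by
  obtain ⟨m, rfl⟩ := Nat.exists_eq_add_of_le hn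
  set N := 1 + m with hN
  rw [geomPoly_one_eq, Finset.sum_range_succ'
    (fun k => (stirling2 N k : ℝ) * k.factorial * x ^ k)]
  have h0 : (stirling2 N 0 : ℝ) = 0 := by
    rw [hN, Nat.add_comm, stirling2_succ_zero]; simp
  rw [h0]
  have key : ∀ i, (stirling2 N (i+1) : ℝ) * (i+1).factorial
      = (∑ j ∈ range N, (N.choose j : ℝ) * stirling2 j i) * i.factorial := by
    intro i
    have h := stirling2_key' N i
    have : ((i+1) * stirling2 N (i+1) : ℝ) = ∑ j ∈ range N, (N.choose j : ℝ) * stirling2 j i := by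
      exact_mod_cast congrArg (Nat.cast : ℕ → ℝ) h
    rw [Nat.factorial_succ]
    push_cast
    push_cast at this
    nlinarith [this]
  calc (∑ i ∈ range N, (stirling2 N (i+1) : ℝ) * (i+1).factorial * x ^ (i+1)) + 0 * Nat.factorial 0 * x ^ 0
      = ∑ i ∈ range N, ∑ j ∈ range N, (N.choose j : ℝ) * stirling2 j i * i.factorial * x ^ i * x := by
        simp only [zero_mul, add_zero]
        refine Finset.sum_congr rfl fun i _ => ?_
        rw [key i, Finset.sum_mul, Finset.sum_mul]
        refine Finset.sum_congr rfl fun j _ => ?_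
        ring
    _ = x * ∑ j ∈ range N, (N.choose j : ℝ) * geomPoly j 1 x := by
        rw [Finset.sum_comm, Finset.mul_sum]
        refine Finset.sum_congr rfl fun j hj => ?_
        rw [geomPoly_one_eq' (Finset.mem_range.1 hj), Finset.mul_sum, Finset.mul_sum]
        refine Finset.sum_congr rfl fun i _ => ?_
        ring

open PowerSeries in
noncomputable def bqSeries : PowerSeries ℚ :=
  PowerSeries.mk fun n => 2 * (1 - 2^(n+1)) * bernoulli (n+1) / (n+1) / n.factorial

noncomputable def bq (n : ℕ) : ℚ := 2 * (1 - 2^(n+1)) * bernoulli (n+1) / (n+1)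

open PowerSeries in
lemma X_mul_bqSeries :
    (X : PowerSeries ℚ) * bqSeries
      = C (2:ℚ) * (bernoulliPowerSeries ℚ - rescale 2 (bernoulliPowerSeries ℚ)) := by
  ext n
  rcases n with _ | n
  · rw [coeff_zero_X_mul]
    simp [bernoulliPowerSeries, coeff_rescale, ← coeff_zero_eq_constantCoeff]
  · rw [coeff_succ_X_mul, bqSeries, coeff_mk, coeff_C_mul,
      map_sub, coeff_rescale, bernoulliPowerSeries, coeff_mk]
    simp only [Algebra.algebraMap_self, RingHom.id_apply]
    have h1 : ((n+1).factorial : ℚ) = (n+1) * n.factorial := by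
      rw [Nat.factorial_succ]; push_cast; ring
    have h2 : ((n.factorial : ℚ)) ≠ 0 := by exact_mod_cast n.factorial_ne_zero
    have h3 : ((n : ℚ) + 1) ≠ 0 := by positivity
    rw [h1]
    field_simp


open PowerSeries in
lemma bqSeries_mul_exp_add_one : bqSeries * (exp ℚ + 1) = C (2:ℚ) := by
  have hB := bernoulliPowerSeries_mul_exp_sub_one ℚ
  have hC2 : (C (R := ℚ)) (2:ℚ) = (2 : PowerSeries ℚ) := map_ofNat (C (R := ℚ)) 2
  have h2 : exp ℚ ^ 2 = rescale (2:ℚ) (exp ℚ) := by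
    have := exp_pow_eq_rescale_exp (A := ℚ) 2
    norm_num at this ⊢
    exact this
  have hres : rescale (2:ℚ) (bernoulliPowerSeries ℚ) * (exp ℚ ^ 2 - 1)
      = 2 * X := by
    have h := congrArg (rescale (2:ℚ)) hB
    rw [map_mul, map_sub, map_one, rescale_X, hC2, ← h2] at h
    exact h
  have key : (X * bqSeries) * ((exp ℚ + 1) * (exp ℚ - 1))
      = (X * (exp ℚ - 1)) * C (2:ℚ) := by
    rw [X_mul_bqSeries, hC2]
    linear_combination (2 * (exp ℚ + 1)) * hB - 2 * hres
  have hne : (X * (exp ℚ - 1) : PowerSeries ℚ) ≠ 0 := by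
    refine mul_ne_zero X_ne_zero fun h => ?_
    have := congrArg (coeff 1) h
    simp [coeff_exp] at this
  refine mul_left_cancel₀ hne ?_
  calc (X * (exp ℚ - 1)) * (bqSeries * (exp ℚ + 1))
      = (X * bqSeries) * ((exp ℚ + 1) * (exp ℚ - 1)) := by ring
    _ = (X * (exp ℚ - 1)) * C (2:ℚ) := key

open PowerSeries in
lemma bq_sum_eq (n : ℕ) (hn : 1 ≤ n) :
    (∑ j ∈ range (n+1), (n.choose j : ℚ) * bq j) + bq n = 0 := by
  have h0 : (∑ p ∈ Finset.HasAntidiagonal.antidiagonal n, bq p.1 / p.1.factorial * (1 / p.2.factorial))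
      + bq n / n.factorial = 0 := by
    have h := congrArg (coeff n) bqSeries_mul_exp_add_one
    rw [mul_add, map_add, mul_one, coeff_mul, coeff_C, if_neg (by omega)] at h
    rw [← h]
    congr 1
    · refine Finset.sum_congr rfl fun p _ => ?_
      rw [coeff_exp, bqSeries, coeff_mk]
      simp [bq, Algebra.algebraMap_self]
    · rw [bqSeries, coeff_mk]; simp [bq]
  rw [Finset.Nat.sum_antidiagonal_eq_sum_range_succ_mk] at h0
  have hfac : ∀ m : ℕ, ((m.factorial : ℚ)) ≠ 0 := fun m => by
    exact_mod_cast m.factorial_ne_zero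
  calc (∑ j ∈ range (n+1), (n.choose j : ℚ) * bq j) + bq n
      = (n.factorial : ℚ) *
        ((∑ k ∈ range (n+1), bq k / k.factorial * (1 / (n-k).factorial)) + bq n / n.factorial) := by
        rw [mul_add, Finset.mul_sum]
        congr 1
        · refine Finset.sum_congr rfl fun k hk => ?_
          rw [Nat.cast_choose ℚ (Nat.lt_succ_iff.1 (Finset.mem_range.1 hk))]
          field_simp
        · field_simp
    _ = 0 := by rw [h0, mul_zero]

lemma bq_rec (n : ℕ) (hn : 1 ≤ n) :
    ∑ j ∈ range n, (n.choose j : ℚ) * bq j = -2 * bq n := by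
  have h := bq_sum_eq n hn
  rw [Finset.sum_range_succ, Nat.choose_self] at h
  push_cast at h
  linarith

lemma geomPoly_eq_bq (n : ℕ) : geomPoly n 1 (-1/2) = (bq n : ℝ) := by
  induction n using Nat.strong_induction_on with
  | _ n ih =>
    rcases n with _ | n
    · rw [geomPoly_zero]
      norm_num [bq]
    rw [geomPoly_rec (n+1) (by omega)]
    have : ∀ j ∈ range (n+1), ((n+1).choose j : ℝ) * geomPoly j 1 (-1/2)
        = ((n+1).choose j : ℝ) * (bq j : ℝ) := fun j hj => by
      rw [ih j (Finset.mem_range.1 hj)]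
    rw [Finset.sum_congr rfl this]
    have h := bq_rec (n+1) (by omega)
    have h' : (∑ j ∈ range (n+1), ((n+1).choose j : ℝ) * (bq j : ℝ)) = -2 * (bq (n+1) : ℝ) := by
      exact_mod_cast congrArg (Rat.cast : ℚ → ℝ) h
    rw [h']
    ring

lemma realZeta_even (k : ℕ) (hk : k ≠ 0) :
    realZeta ((2*k : ℕ) : ℝ)
      = (-1:ℝ)^(k+1) * 2^(2*k-1) * Real.pi^(2*k) * (bernoulli (2*k) : ℝ) / (2*k).factorial := by
  have h := hasSum_zeta_nat (k := k) hk
  have h2 : HasSum (fun j : ℕ => 1/((j:ℝ)+1)^(2*k))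
      ((-1:ℝ)^(k+1) * 2^(2*k-1) * Real.pi^(2*k) * (bernoulli (2*k) : ℝ) / (2*k).factorial) := by
    have h2' : HasSum (fun j : ℕ => 1/(((j+1 : ℕ)):ℝ)^(2*k))
        ((-1:ℝ)^(k+1) * 2^(2*k-1) * Real.pi^(2*k) * (bernoulli (2*k) : ℝ) / (2*k).factorial) := by
      rw [hasSum_nat_add_iff (f := fun n : ℕ => 1/(n:ℝ)^(2*k)) 1]
      convert h using 1
      · rfl
      rw [Finset.sum_range_one]
      norm_num [zero_pow (by omega : 2*k ≠ 0)]
    have heq : (fun j : ℕ => 1/((j:ℝ)+1)^(2*k)) = fun j : ℕ => 1/(((j+1 : ℕ)):ℝ)^(2*k) := by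
      funext j; push_cast; ring_nf
    rw [heq]
    exact h2'
  unfold realZeta
  rw [← h2.tsum_eq]
  congr 1
  funext j
  rw [Real.rpow_natCast]

lemma bq_even_zero (m : ℕ) (hm : 1 ≤ m) : bq (2*m) = 0 := by
  have hb : bernoulli (2*m+1) = 0 := by
    rw [bernoulli_eq_bernoulli'_of_ne_one (by omega),
      bernoulli'_eq_zero_of_odd ⟨m, by ring⟩ (by omega)]
  simp [bq, hb]

lemma sin_odd (m : ℕ) : Real.sin (Real.pi * (2*m+1 : ℕ) / 2) = (-1:ℝ)^m := by
  have h1 : Real.pi * ((2*m+1 : ℕ) : ℝ) / 2 = m*Real.pi + Real.pi/2 := by push_cast; ring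
  rw [h1, Real.sin_add_pi_div_two]
  simpa using Real.cos_nat_mul_pi_sub 0 m

lemma sin_even (m : ℕ) : Real.sin (Real.pi * (2*m : ℕ) / 2) = 0 := by
  have h1 : Real.pi * ((2*m : ℕ) : ℝ) / 2 = m*Real.pi := by push_cast; ring
  rw [h1, Real.sin_nat_mul_pi]

lemma main_odd (m : ℕ) :
    (bq (2*m+1) : ℝ) =
      4 * (-1 : ℝ) ^ (2*m+1) * ((2*m+1).factorial : ℝ) / Real.pi ^ (2*m+1 + 1) *
        (1 - 1 / 2 ^ (2*m+1 + 1)) * ((-1:ℝ)^m) *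
        ((-1:ℝ)^(m+1+1) * 2^(2*(m+1)-1) * Real.pi^(2*(m+1)) * (bernoulli (2*(m+1)) : ℝ)
          / (2*(m+1)).factorial) := by
  have e1 : 2*(m+1) = 2*m+1+1 := by ring
  have e2 : 2*(m+1)-1 = 2*m+1 := by omega
  rw [e2, e1]
  have hfac : ((2*m+1+1).factorial : ℝ) = (2*m+1+1) * (2*m+1).factorial := by
    rw [Nat.factorial_succ]; push_cast; ring
  rw [hfac]
  have hb : (bq (2*m+1) : ℝ) = 2 * (1 - 2^(2*m+1+1)) * (bernoulli (2*m+1+1) : ℝ) / (2*m+1+1) := by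
    unfold bq
    push_cast
    ring
  rw [hb]
  have hpi : Real.pi ≠ 0 := Real.pi_ne_zero
  have hfne : ((2*m+1).factorial : ℝ) ≠ 0 := by exact_mod_cast (2*m+1).factorial_ne_zero
  have hm1 : (-1:ℝ)^(2*m+1) = -1 := by
    rw [pow_succ, pow_mul]; norm_num
  have hm3 : (-1:ℝ)^(m+1+1) = (-1:ℝ)^m := by
    rw [pow_succ, pow_succ]; ring
  rw [hm1, hm3]
  rcases Nat.even_or_odd m with he | ho
  · rw [he.neg_one_pow]
    field_simp
    ring
  · rw [ho.neg_one_pow]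
    field_simp
    ring

/-- For every integer `n ≥ 1`,
`ω_n(−1/2) = (4(−1)^n n!/π^{n+1}) (1 − 1/2^{n+1}) sin(πn/2) ζ(n+1)`;
in particular, `ω_{2k}(−1/2) = 0` for every integer `k ≥ 1`. -/
theorem geomPoly_at_neg_half :
    (∀ n : ℕ, 1 ≤ n →
      geomPoly n 1 (-1 / 2) =
        4 * (-1 : ℝ) ^ n * (n.factorial : ℝ) / Real.pi ^ (n + 1) *
          (1 - 1 / 2 ^ (n + 1)) * Real.sin (Real.pi * n / 2) * realZeta ((n : ℝ) + 1)) ∧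
    (∀ k : ℕ, 1 ≤ k → geomPoly (2 * k) 1 (-1 / 2) = 0) := by
  constructor
  · intro n hn
    rcases Nat.even_or_odd n with ⟨m, rfl⟩ | ⟨m, rfl⟩
    · have hm : 1 ≤ m := by omega
      have hs : Real.sin (Real.pi * ((m+m : ℕ):ℝ)/2) = 0 := by
        have := sin_even m
        rw [show 2*m = m+m from by ring] at this
        exact this
      rw [hs, mul_zero, zero_mul, geomPoly_eq_bq]
      have hb : bq (m+m) = 0 := by
        rw [show m+m = 2*m from by ring]
        exact bq_even_zero m hm
      rw [hb]
      norm_num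
    · rw [geomPoly_eq_bq, sin_odd m]
      have hz : ((2*m+1 : ℕ) : ℝ) + 1 = ((2*(m+1) : ℕ) : ℝ) := by push_cast; ring
      rw [hz, realZeta_even (m+1) (by omega)]
      exact main_odd m
  · intro k hk
    rw [geomPoly_eq_bq, bq_even_zero k hk]
    norm_num
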